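/- In the electricity pool model (P2), both UBMCI(E) = a·max_{1 ≤ t ≤ T} g*_t(E) + b and LBMCI(E) = a·min_{1 ≤ t ≤ T} g*_t(E) + b converge to a·d̄ + b as E → ∞. -/

import Mathlib

open Finset Filter

/-- Feasibility for the electricity pool model (P2) at storage capacity `E`:
the states of charge `x_k = E/2 + ∑_{t ≤ k} u t` (with `x_0 = E/2`) satisfy
`0 ≤ x_k ≤ E` for all `k`, and the terminal condition `x_T = E/2` holds. -/
def poolFeasible (T : ℕ) (E : ℝ) (u : Fin T → ℝ) : Prop :=
  (∀ k : Fin T, 0 ≤ E / 2 + ∑ t ∈ Finset.Iic k, u t) ∧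
  (∀ k : Fin T, E / 2 + ∑ t ∈ Finset.Iic k, u t ≤ E) ∧
  E / 2 + ∑ t, u t = E / 2

/-- Total generation cost `∑ t C (d t + u t)` with `C g = (1/2)·a·g² + b·g + c`. -/
noncomputable def poolCost (T : ℕ) (a b c : ℝ) (d u : Fin T → ℝ) : ℝ :=
  ∑ t, ((1 / 2) * a * (d t + u t) ^ 2 + b * (d t + u t) + c)

/-- Optimal cost `C*(E)` of the pool model (P2). -/
noncomputable def poolCstar (T : ℕ) (a b c : ℝ) (d : Fin T → ℝ) (E : ℝ) : ℝ :=
  sInf {y : ℝ | ∃ u : Fin T → ℝ, poolFeasible T E u ∧ y = poolCost T a b c d u}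

/-- In the pool model (P2), both
`UBMCI(E) = a·max_t g*_t(E) + b` and `LBMCI(E) = a·min_t g*_t(E) + b`
converge to `a·d̄ + b` as `E → ∞`. Here `gstar` is any selection of optimal
generation profiles. -/
theorem pool_ubmci_lbmci_tendsto
    (T : ℕ) (hT : 1 ≤ T) (a b c : ℝ) (ha : 0 < a) (d : Fin T → ℝ)
    (gstar : ℝ → Fin T → ℝ)
    (hgstar : ∀ E : ℝ, 0 ≤ E → ∃ u : Fin T → ℝ, poolFeasible T E u ∧
      (∀ t, gstar E t = d t + u t) ∧
      poolCost T a b c d u = poolCstar T a b c d E) :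
    Tendsto
      (fun E : ℝ => a * Finset.univ.sup' ⟨⟨0, hT⟩, Finset.mem_univ _⟩ (gstar E) + b)
      atTop (nhds (a * ((∑ t, d t) / (T : ℝ)) + b)) ∧
    Tendsto
      (fun E : ℝ => a * Finset.univ.inf' ⟨⟨0, hT⟩, Finset.mem_univ _⟩ (gstar E) + b)
      atTop (nhds (a * ((∑ t, d t) / (T : ℝ)) + b)) := by

  classical
  have hT0 : (T : ℝ) ≠ 0 := Nat.cast_ne_zero.2 (by omega)
  set dbar : ℝ := (∑ t, d t) / (T : ℝ) with hdbar
  set u₀ : Fin T → ℝ := fun t => dbar - d t with hu₀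
  set E₀ : ℝ := 2 * ∑ t, |u₀ t| with hE₀
  have hsum_u0 : ∑ t, u₀ t = 0 := by
    simp only [hu₀, Finset.sum_sub_distrib, Finset.sum_const, Finset.card_univ,
      Fintype.card_fin, nsmul_eq_mul, hdbar]
    field_simp
    ring
  -- boundedness below of the cost set
  have hbdd : ∀ E : ℝ, BddBelow {y : ℝ | ∃ u : Fin T → ℝ,
      poolFeasible T E u ∧ y = poolCost T a b c d u} := by
    intro E
    refine ⟨(T : ℝ) * (c - b ^ 2 / (2 * a)), ?_⟩
    rintro y ⟨v, -, rfl⟩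
    have h2a : (0 : ℝ) < 2 * a := by linarith
    calc (T : ℝ) * (c - b ^ 2 / (2 * a))
        = ∑ _t : Fin T, (c - b ^ 2 / (2 * a)) := by
          rw [Finset.sum_const, Finset.card_univ, Fintype.card_fin, nsmul_eq_mul]
      _ ≤ poolCost T a b c d v := by
          refine Finset.sum_le_sum fun t _ => ?_
          have key : (1 / 2) * a * (d t + v t) ^ 2 + b * (d t + v t) + c
              - (c - b ^ 2 / (2 * a)) = (a * (d t + v t) + b) ^ 2 / (2 * a) := by
            field_simp
            ring
          have h0 : 0 ≤ (a * (d t + v t) + b) ^ 2 / (2 * a) :=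
            div_nonneg (sq_nonneg _) h2a.le
          linarith
  -- the key eventual constancy
  have key : ∀ E : ℝ, max E₀ 0 ≤ E → ∀ t, gstar E t = dbar := by
    intro E hE t
    have hE0 : (0 : ℝ) ≤ E := le_trans (le_max_right _ _) hE
    have hEE0 : E₀ ≤ E := le_trans (le_max_left _ _) hE
    obtain ⟨u, hfeas, hg, hcost⟩ := hgstar E hE0
    -- u₀ is feasible
    have hbound : ∀ k : Fin T, |∑ t ∈ Finset.Iic k, u₀ t| ≤ E₀ / 2 := by
      intro k
      calc |∑ t ∈ Finset.Iic k, u₀ t| ≤ ∑ t ∈ Finset.Iic k, |u₀ t| :=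
            Finset.abs_sum_le_sum_abs _ _
        _ ≤ ∑ t, |u₀ t| :=
            Finset.sum_le_sum_of_subset_of_nonneg (Finset.subset_univ _)
              (fun t _ _ => abs_nonneg _)
        _ = E₀ / 2 := by rw [hE₀]; ring
    have hfeas0 : poolFeasible T E u₀ := by
      refine ⟨fun k => ?_, fun k => ?_, by rw [hsum_u0, add_zero]⟩
      · have := (abs_le.1 (hbound k)).1; linarith
      · have := (abs_le.1 (hbound k)).2; linarith
    have hsum_u : ∑ t, u t = 0 := by
      have := hfeas.2.2; linarith
    -- optimality comparison
    have h1 : poolCost T a b c d u ≤ poolCost T a b c d u₀ := by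
      rw [hcost]
      exact csInf_le (hbdd E) ⟨u₀, hfeas0, rfl⟩
    have h2 : poolCost T a b c d u₀
        = ∑ _t : Fin T, ((1 / 2) * a * dbar ^ 2 + b * dbar + c) := by
      unfold poolCost
      refine Finset.sum_congr rfl fun t _ => ?_
      simp [hu₀]
    have hzero : ∑ t, (d t + u t - dbar) = 0 := by
      have : ∑ t, (d t + u t - dbar) = ∑ t, d t + ∑ t, u t - (T : ℝ) * dbar := by
        rw [Finset.sum_sub_distrib, Finset.sum_add_distrib, Finset.sum_const,
          Finset.card_univ, Fintype.card_fin, nsmul_eq_mul]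
      rw [this, hsum_u, hdbar]
      field_simp
      ring
    have h3 : poolCost T a b c d u
        = (∑ _t : Fin T, ((1 / 2) * a * dbar ^ 2 + b * dbar + c))
          + (a / 2) * ∑ t, (d t + u t - dbar) ^ 2 := by
      unfold poolCost
      have expand : ∀ t : Fin T,
          (1 / 2) * a * (d t + u t) ^ 2 + b * (d t + u t) + c
          = ((1 / 2) * a * dbar ^ 2 + b * dbar + c)
            + (a / 2) * (d t + u t - dbar) ^ 2
            + (a * dbar + b) * (d t + u t - dbar) := fun t => by ring
      rw [Finset.sum_congr rfl fun t _ => expand t, Finset.sum_add_distrib,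
        Finset.sum_add_distrib, ← Finset.mul_sum, ← Finset.mul_sum, hzero,
        mul_zero, add_zero]
    have hSnonneg : (0 : ℝ) ≤ ∑ t, (d t + u t - dbar) ^ 2 :=
      Finset.sum_nonneg fun t _ => sq_nonneg _
    have hSle : ∑ t, (d t + u t - dbar) ^ 2 ≤ 0 := by
      rw [h3, h2] at h1
      nlinarith
    have hS0 : ∑ t, (d t + u t - dbar) ^ 2 = 0 := le_antisymm hSle hSnonneg
    have ht0 : (d t + u t - dbar) ^ 2 = 0 := by
      have := (Finset.sum_eq_zero_iff_of_nonneg fun t _ => sq_nonneg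
        (d t + u t - dbar)).1 hS0 t (Finset.mem_univ t)
      exact this
    have : d t + u t = dbar := by
      have := pow_eq_zero_iff (n := 2) (by norm_num) |>.1 ht0
      linarith [sub_eq_zero.1 this]
    rw [hg t, this]
  constructor
  · have hev : (fun E : ℝ => a * Finset.univ.sup'
        ⟨⟨0, hT⟩, Finset.mem_univ _⟩ (gstar E) + b) =ᶠ[atTop]
        fun _ => a * dbar + b := by
      filter_upwards [eventually_ge_atTop (max E₀ 0)] with E hE
      have hconst : gstar E = fun _ => dbar := funext (key E hE)
      rw [hconst]
      exact congrArg (fun x => a * x + b) (Finset.sup'_const _ _)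
    exact Filter.Tendsto.congr' hev.symm tendsto_const_nhds
  · have hev : (fun E : ℝ => a * Finset.univ.inf'
        ⟨⟨0, hT⟩, Finset.mem_univ _⟩ (gstar E) + b) =ᶠ[atTop]
        fun _ => a * dbar + b := by
      filter_upwards [eventually_ge_atTop (max E₀ 0)] with E hE
      have hconst : gstar E = fun _ => dbar := funext (key E hE)
      rw [hconst]
      exact congrArg (fun x => a * x + b) (Finset.inf'_const _ _)
    exact Filter.Tendsto.congr' hev.symm tendsto_const_nhds
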